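/- arXiv:2405.05778 — 4 statements merged into one kernel-verified Lean document; each statement's English description precedes it below -/
import Mathlib

section
/- Let ν, λ > 0 and let V̂ : ℝ² → [0,∞) be bounded by M and supported in the closed unit ball. Then for every ε ∈ (0,1) and every a ∈ ℝ², ∫_{ℝ²} V̂(q) / (ε²λ + (ν²/2)|a + q|²) dq ≤ C·(1 + log(1 + ν²/(2ε²λ))) for a constant C depending only on M and ν. -/
open MeasureTheory Metric Set

lemma aux1d (A B : ℝ) (hA : 0 < A) (hB : 0 < B) :
    ∫ r in (0:ℝ)..1, r / (A + B * r ^ 2) = Real.log ((A + B) / A) / (2 * B) := by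
  have hpos : ∀ r : ℝ, 0 < A + B * r ^ 2 := fun r => by positivity
  have hd : ∀ r ∈ Set.uIcc (0:ℝ) 1,
      HasDerivAt (fun r => Real.log (A + B * r ^ 2) / (2 * B)) (r / (A + B * r ^ 2)) r := by
    intro r _
    have h1 : HasDerivAt (fun r : ℝ => A + B * r ^ 2) (B * (2 * r ^ 1)) r := by
      simpa using ((hasDerivAt_pow 2 r).const_mul B).const_add A
    have h2 := (Real.hasDerivAt_log (hpos r).ne').comp r h1
    have h3 := h2.div_const (2 * B)
    exact h3.congr_deriv (by field_simp)
  have hc : Continuous (fun r : ℝ => r / (A + B * r ^ 2)) :=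
    continuous_id.div (by continuity) (fun r => (hpos r).ne')
  rw [intervalIntegral.integral_eq_sub_of_hasDerivAt hd (hc.intervalIntegrable 0 1)]
  rw [Real.log_div (by positivity) hA.ne']
  norm_num
  ring

lemma auxpolar (A B M : ℝ) (hA : 0 < A) (hB : 0 < B) :
    ∫ x : EuclideanSpace ℝ (Fin 2),
      (closedBall (0 : EuclideanSpace ℝ (Fin 2)) 1).indicator
        (fun x => M / (A + B * ‖x‖ ^ 2)) x
      = Real.pi * M / B * Real.log ((A + B) / A) := by
  set F : ℝ → ℝ := (Set.Iic (1:ℝ)).indicator (fun r => M / (A + B * r ^ 2)) with hF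
  have h1 : ∀ x : EuclideanSpace ℝ (Fin 2),
      (closedBall (0 : EuclideanSpace ℝ (Fin 2)) 1).indicator
        (fun x => M / (A + B * ‖x‖ ^ 2)) x = F ‖x‖ := by
    intro x
    by_cases hx : ‖x‖ ≤ 1 <;>
      simp [hF, Set.indicator, mem_closedBall_zero_iff, hx]
  rw [integral_congr_ae (Filter.Eventually.of_forall h1)]
  rw [MeasureTheory.integral_fun_norm_addHaar volume F]
  have hdim : Module.finrank ℝ (EuclideanSpace ℝ (Fin 2)) = 2 := finrank_euclideanSpace_fin
  rw [hdim]
  have hvol : (volume (ball (0 : EuclideanSpace ℝ (Fin 2)) 1)).toReal = Real.pi := by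
    rw [EuclideanSpace.volume_ball]
    have h22 : ((2:ℝ) / 2 + 1) = 2 := by norm_num
    simp [Fintype.card_fin, h22, Real.Gamma_two, Real.sq_sqrt Real.pi_pos.le]
    rw [show (1:ℝ) + 1 = 2 by norm_num, Real.Gamma_two]
    simp [Real.pi_pos.le]
  rw [measureReal_def, hvol]
  have h2 : (∫ y in Set.Ioi (0:ℝ), y ^ (2 - 1) • F y)
      = M * (Real.log ((A + B) / A) / (2 * B)) := by
    have h3 : ∀ y : ℝ, y ^ (2 - 1) • F y
        = (Set.Iic (1:ℝ)).indicator (fun y => y * (M / (A + B * y ^ 2))) y := by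
      intro y
      by_cases hy : y ≤ 1 <;> simp [hF, Set.indicator, hy]
    rw [integral_congr_ae (Filter.Eventually.of_forall fun y => h3 y)]
    rw [MeasureTheory.setIntegral_indicator measurableSet_Iic, Set.Ioi_inter_Iic]
    rw [← intervalIntegral.integral_of_le zero_le_one]
    rw [intervalIntegral.integral_congr (g := fun y => M * (y / (A + B * y ^ 2)))
      (fun y _ => by ring)]
    rw [intervalIntegral.integral_const_mul, aux1d A B hA hB]
  rw [h2]
  simp [nsmul_eq_mul, smul_eq_mul]
  ring

theorem stmt5 (ν M : ℝ) (hν : 0 < ν) (hM : 0 ≤ M) :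
    ∃ C : ℝ, 0 < C ∧ ∀ V : EuclideanSpace ℝ (Fin 2) → ℝ, Measurable V →
      (∀ q, 0 ≤ V q) → (∀ q, V q ≤ M) → (∀ q, 1 < ‖q‖ → V q = 0) →
      ∀ lam ε : ℝ, 0 < lam → ε ∈ Set.Ioo (0 : ℝ) 1 →
      ∀ a : EuclideanSpace ℝ (Fin 2),
        (∫ q : EuclideanSpace ℝ (Fin 2), V q / (ε ^ 2 * lam + ν ^ 2 / 2 * ‖a + q‖ ^ 2))
          ≤ C * (1 + Real.log (1 + ν ^ 2 / (2 * ε ^ 2 * lam))) := by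
  have hB : (0:ℝ) < ν ^ 2 / 2 := by positivity
  refine ⟨Real.pi * (M + 1) / (ν ^ 2 / 2), by positivity, ?_⟩
  intro V hVm hV0 hVM hVsupp lam ε hlam hε a
  obtain ⟨hε0, hε1⟩ := hε
  set B : ℝ := ν ^ 2 / 2 with hBdef
  set A : ℝ := ε ^ 2 * lam with hAdef
  have hA : 0 < A := by positivity
  have hpos : ∀ x : EuclideanSpace ℝ (Fin 2), 0 < A + B * ‖x‖ ^ 2 := fun x => by positivity
  set f : EuclideanSpace ℝ (Fin 2) → ℝ :=
    (closedBall (0 : EuclideanSpace ℝ (Fin 2)) 1).indicator (fun x => M / (A + B * ‖x‖ ^ 2))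
    with hfdef
  set g : EuclideanSpace ℝ (Fin 2) → ℝ := fun q => V q / (A + B * ‖a + q‖ ^ 2) with hgdef
  set ind : EuclideanSpace ℝ (Fin 2) → ℝ :=
    (closedBall (0 : EuclideanSpace ℝ (Fin 2)) 1).indicator 1 with hinddef
  set h : EuclideanSpace ℝ (Fin 2) → ℝ := fun q => f (a + q) + (M / B) * ind q with hhdef
  have hf_nonneg : ∀ x, 0 ≤ f x := by
    intro x
    simp only [hfdef]
    exact Set.indicator_nonneg (fun x _ => by positivity) x
  have hind_nonneg : ∀ x, 0 ≤ ind x :=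
    fun x => Set.indicator_nonneg (fun x _ => zero_le_one) x
  -- pointwise bound
  have hgh : ∀ q, g q ≤ h q := by
    intro q
    by_cases hq : ‖q‖ ≤ 1
    · have hind1 : ind q = 1 := by
        simp [hinddef, Set.indicator, mem_closedBall_zero_iff, hq]
      by_cases hx : ‖a + q‖ ≤ 1
      · have hfx : f (a + q) = M / (A + B * ‖a + q‖ ^ 2) := by
          simp [hfdef, Set.indicator, mem_closedBall_zero_iff, hx]
        have h1 : g q ≤ M / (A + B * ‖a + q‖ ^ 2) :=
          div_le_div₀ hM (hVM q) (hpos _) le_rfl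
        have h2 : (0:ℝ) ≤ M / B := by positivity
        rw [hhdef]
        simp only [hfx, hind1, mul_one]
        linarith
      · have hfx : f (a + q) = 0 := by
          simp [hfdef, Set.indicator, mem_closedBall_zero_iff, hx]
        have hBD : B ≤ A + B * ‖a + q‖ ^ 2 := by
          have : (1:ℝ) ≤ ‖a + q‖ ^ 2 := by nlinarith [not_le.mp hx, norm_nonneg (a + q)]
          nlinarith
        have h1 : g q ≤ M / B := div_le_div₀ hM (hVM q) hB hBD
        rw [hhdef]
        simp only [hfx, hind1, zero_add, mul_one]
        exact h1
    · have hV : V q = 0 := hVsupp q (not_le.mp hq)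
      have hg0 : g q = 0 := by simp [hgdef, hV]
      rw [hg0, hhdef]
      have := hf_nonneg (a + q)
      have := hind_nonneg q
      positivity
  -- integrability
  have hcont : Continuous (fun x : EuclideanSpace ℝ (Fin 2) => M / (A + B * ‖x‖ ^ 2)) :=
    continuous_const.div (continuous_const.add (continuous_const.mul (continuous_norm.pow 2))) (fun x => (hpos x).ne')
  have hf_int : Integrable f := by
    rw [hfdef, integrable_indicator_iff measurableSet_closedBall]
    apply Measure.integrableOn_of_bounded measure_closedBall_lt_top.ne
      hcont.aestronglyMeasurable (M := M / A)
    filter_upwards with x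
    rw [Real.norm_eq_abs, abs_of_nonneg (by positivity)]
    apply div_le_div₀ hM le_rfl hA
    nlinarith [norm_nonneg x, sq_nonneg ‖x‖]
  have hfa_int : Integrable (fun q => f (a + q)) := hf_int.comp_add_left a
  have hind_int : Integrable ind := by
    rw [hinddef, integrable_indicator_iff measurableSet_closedBall]
    exact integrableOn_const measure_closedBall_lt_top.ne
  have hh_int : Integrable h := hfa_int.add (hind_int.const_mul _)
  have hcont2 : Continuous (fun q : EuclideanSpace ℝ (Fin 2) => A + B * ‖a + q‖ ^ 2) :=
    continuous_const.add (continuous_const.mul (((continuous_const.add continuous_id).norm).pow 2))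
  have hg_meas : Measurable g := hVm.div hcont2.measurable
  have hg_eq : g = (closedBall (0 : EuclideanSpace ℝ (Fin 2)) 1).indicator g := by
    funext q
    by_cases hq : ‖q‖ ≤ 1
    · simp [Set.indicator, mem_closedBall_zero_iff, hq]
    · have hV : V q = 0 := hVsupp q (not_le.mp hq)
      simp [Set.indicator, mem_closedBall_zero_iff, hq, hgdef, hV]
  have hg_int : Integrable g := by
    rw [hg_eq, integrable_indicator_iff measurableSet_closedBall]
    apply Measure.integrableOn_of_bounded measure_closedBall_lt_top.ne
      hg_meas.aestronglyMeasurable (M := M / A)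
    filter_upwards with q
    simp only [hgdef, Real.norm_eq_abs]
    rw [abs_of_nonneg (div_nonneg (hV0 q) (hpos _).le)]
    apply div_le_div₀ hM (hVM q) hA
    nlinarith [norm_nonneg (a + q), sq_nonneg ‖a + q‖]
  -- integral computation
  have hmono : ∫ q, g q ≤ ∫ q, h q := integral_mono hg_int hh_int hgh
  have hvolc : (volume (closedBall (0 : EuclideanSpace ℝ (Fin 2)) 1)).toReal = Real.pi := by
    rw [EuclideanSpace.volume_closedBall]
    have h22 : ((2:ℝ) / 2 + 1) = 2 := by norm_num
    simp only [Fintype.card_fin, Nat.cast_ofNat, h22, Real.sq_sqrt Real.pi_pos.le, one_pow,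
      ENNReal.ofReal_one, one_mul]
    rw [Real.Gamma_two]
    simp [Real.pi_pos.le]
  have hinth : ∫ q, h q = Real.pi * M / B * Real.log ((A + B) / A) + (M / B) * Real.pi := by
    rw [hhdef]
    rw [integral_add hfa_int (hind_int.const_mul _), integral_const_mul]
    rw [MeasureTheory.integral_add_left_eq_self f a]
    rw [hinddef, integral_indicator_one measurableSet_closedBall, measureReal_def, hvolc]
    rw [hfdef, auxpolar A B M hA hB]
  -- final arithmetic
  have hlogeq : (A + B) / A = 1 + ν ^ 2 / (2 * ε ^ 2 * lam) := by
    rw [hAdef, hBdef]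
    field_simp
  have hL : 0 ≤ Real.log (1 + ν ^ 2 / (2 * ε ^ 2 * lam)) := by
    apply Real.log_nonneg
    have : 0 ≤ ν ^ 2 / (2 * ε ^ 2 * lam) := by positivity
    linarith
  calc ∫ q, g q ≤ ∫ q, h q := hmono
    _ = Real.pi * M / B * Real.log (1 + ν ^ 2 / (2 * ε ^ 2 * lam)) + (M / B) * Real.pi := by
        rw [hinth, hlogeq]
    _ = Real.pi / B * M * (1 + Real.log (1 + ν ^ 2 / (2 * ε ^ 2 * lam))) := by ring
    _ ≤ Real.pi / B * (M + 1) * (1 + Real.log (1 + ν ^ 2 / (2 * ε ^ 2 * lam))) := by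
        apply mul_le_mul_of_nonneg_right _ (by linarith)
        apply mul_le_mul_of_nonneg_left (by linarith) (by positivity)
    _ = Real.pi * (M + 1) / B * (1 + Real.log (1 + ν ^ 2 / (2 * ε ^ 2 * lam))) := by ring
end

section
/- Let ν, λ > 0 and let V̂ : ℝ² → [0,∞) be bounded by M and supported in the unit ball. Then for every a ∈ ℝ², ∫_{ℝ²} V̂(q) / (λ + (ν²/2)|a + q|²)² dq ≤ C/λ, where C depends only on M and ν (not on a or λ). -/
open MeasureTheory

section Aux

local notation "E2" => EuclideanSpace ℝ (Fin 2)

lemma aux_onedim (c lam : ℝ) (hc : 0 < c) (hlam : 0 < lam) :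
    ∫ r in Set.Ioi (0:ℝ), r * ((lam + c * r ^ 2) ^ 2)⁻¹ = (2 * c * lam)⁻¹ := by
  have key : ∫ r in Set.Ioi (0:ℝ), r * ((lam + c * r ^ 2) ^ 2)⁻¹
      = 0 - (-(2 * c)⁻¹ * (lam + c * (0:ℝ) ^ 2)⁻¹) := by
    apply integral_Ioi_of_hasDerivAt_of_nonneg'
      (g := fun r : ℝ => -(2 * c)⁻¹ * (lam + c * r ^ 2)⁻¹)
    · intro x _
      have hD : lam + c * x ^ 2 ≠ 0 := by positivity
      have h1 : HasDerivAt (fun r : ℝ => lam + c * r ^ 2) (c * (2 * x)) x := by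
        simpa using ((hasDerivAt_pow 2 x).const_mul c).const_add lam
      have h2 := (h1.inv hD).const_mul (-(2 * c)⁻¹)
      refine h2.congr_deriv ?_
      field_simp
    · intro x hx
      have hx0 : 0 < x := hx
      positivity
    · have h1 : Filter.Tendsto (fun r : ℝ => lam + c * r ^ 2) Filter.atTop Filter.atTop := by
        apply Filter.tendsto_atTop_add_const_left
        exact (Filter.tendsto_pow_atTop (by norm_num)).const_mul_atTop hc
      have h2 : Filter.Tendsto (fun r : ℝ => (lam + c * r ^ 2)⁻¹) Filter.atTop (nhds 0) :=
        h1.inv_tendsto_atTop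
      simpa using h2.const_mul (-(2 * c)⁻¹)
  rw [key]
  field_simp
  ring

lemma aux_integrable (c lam : ℝ) (hc : 0 < c) (hlam : 0 < lam) :
    Integrable (fun x : E2 => ((lam + c * ‖x‖ ^ 2) ^ 2)⁻¹) := by
  set m : ℝ := max lam⁻¹ c⁻¹ with hm
  have hm0 : 0 < m := lt_max_of_lt_left (by positivity)
  have hint : Integrable (fun x : E2 => ((1:ℝ) + ‖x‖ ^ 2) ^ (-(3:ℝ) / 2)) := by
    apply integrable_rpow_neg_one_add_norm_sq (r := 3)
    simp [finrank_euclideanSpace]; norm_num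
  refine ((hint.const_mul (m ^ 2)).mono' ?_ ?_)
  · exact (Continuous.inv₀ (by continuity) (fun x => by positivity)).aestronglyMeasurable
  · filter_upwards with x
    have hD : 0 < lam + c * ‖x‖ ^ 2 := by positivity
    have h1 : (1:ℝ) + ‖x‖ ^ 2 ≤ m * (lam + c * ‖x‖ ^ 2) := by
      have ha : (1:ℝ) ≤ m * lam := by
        rw [hm]
        calc (1:ℝ) = lam⁻¹ * lam := by field_simp
        _ ≤ max lam⁻¹ c⁻¹ * lam := by
            apply mul_le_mul_of_nonneg_right (le_max_left _ _) hlam.le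
      have hb : ‖x‖ ^ 2 ≤ m * (c * ‖x‖ ^ 2) := by
        calc ‖x‖ ^ 2 = c⁻¹ * (c * ‖x‖ ^ 2) := by field_simp
        _ ≤ m * (c * ‖x‖ ^ 2) := by
            apply mul_le_mul_of_nonneg_right (le_max_right _ _) (by positivity)
      calc (1:ℝ) + ‖x‖ ^ 2 ≤ m * lam + m * (c * ‖x‖ ^ 2) := add_le_add ha hb
      _ = m * (lam + c * ‖x‖ ^ 2) := by ring
    have h15 : ((1:ℝ) + ‖x‖ ^ 2) ^ (3/2 : ℝ) ≤ ((1:ℝ) + ‖x‖ ^ 2) ^ (2 : ℝ) := by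
      apply Real.rpow_le_rpow_of_exponent_le (by nlinarith [sq_nonneg ‖x‖]) (by norm_num)
    have h2 : ((1:ℝ) + ‖x‖ ^ 2) ^ (2 : ℝ) ≤ (m * (lam + c * ‖x‖ ^ 2)) ^ (2 : ℝ) := by
      apply Real.rpow_le_rpow (by positivity) h1 (by norm_num)
    have hpos : (0:ℝ) < ((1:ℝ) + ‖x‖ ^ 2) ^ (3/2 : ℝ) := by positivity
    rw [Real.norm_eq_abs, abs_of_nonneg (by positivity)]
    rw [inv_le_iff_one_le_mul₀ (by positivity)]
    calc (1:ℝ) = ((1:ℝ) + ‖x‖ ^ 2) ^ (3/2 : ℝ) * ((1:ℝ) + ‖x‖ ^ 2) ^ (-(3:ℝ)/2) := by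
          rw [← Real.rpow_add (by positivity)]; norm_num
    _ ≤ (m * (lam + c * ‖x‖ ^ 2)) ^ (2 : ℝ) * ((1:ℝ) + ‖x‖ ^ 2) ^ (-(3:ℝ)/2) := by
          apply mul_le_mul_of_nonneg_right (h15.trans h2) (by positivity)
    _ = m ^ 2 * ((1:ℝ) + ‖x‖ ^ 2) ^ (-(3:ℝ)/2) * (lam + c * ‖x‖ ^ 2) ^ 2 := by
          rw [Real.mul_rpow hm0.le hD.le, Real.rpow_two, Real.rpow_two]
          ring

lemma aux_twodim (c lam : ℝ) (hc : 0 < c) (hlam : 0 < lam) :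
    ∫ x : E2, ((lam + c * ‖x‖ ^ 2) ^ 2)⁻¹
      = 2 * (volume (Metric.ball (0:E2) 1)).toReal * (2 * c * lam)⁻¹ := by
  have h := integral_fun_norm_addHaar (volume : Measure E2)
    (fun r : ℝ => ((lam + c * r ^ 2) ^ 2)⁻¹)
  have hdim : Module.finrank ℝ E2 = 2 := by simp [finrank_euclideanSpace]
  rw [hdim] at h
  rw [h]
  simp only [smul_eq_mul, nsmul_eq_mul, Nat.cast_ofNat, show (2-1 : ℕ) = 1 from rfl, pow_one]
  rw [aux_onedim c lam hc hlam]
  simp only [measureReal_def]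
  ring

end Aux

theorem stmt6 (ν M : ℝ) (hν : 0 < ν) (hM : 0 ≤ M) :
    ∃ C : ℝ, 0 < C ∧ ∀ V : EuclideanSpace ℝ (Fin 2) → ℝ, Measurable V →
      (∀ q, 0 ≤ V q) → (∀ q, V q ≤ M) → (∀ q, 1 < ‖q‖ → V q = 0) →
      ∀ lam : ℝ, 0 < lam →
      ∀ a : EuclideanSpace ℝ (Fin 2),
        (∫ q : EuclideanSpace ℝ (Fin 2), V q / (lam + ν ^ 2 / 2 * ‖a + q‖ ^ 2) ^ 2)
          ≤ C / lam := by
  set c : ℝ := ν ^ 2 / 2 with hcdef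
  have hc : 0 < c := by positivity
  set B : ℝ := (volume (Metric.ball (0 : EuclideanSpace ℝ (Fin 2)) 1)).toReal with hBdef
  have hB : 0 ≤ B := ENNReal.toReal_nonneg
  refine ⟨M * B / c + 1, by positivity, ?_⟩
  intro V hVmeas hV0 hVM _ lam hlam a
  have hint : Integrable (fun x : EuclideanSpace ℝ (Fin 2) => ((lam + c * ‖x‖ ^ 2) ^ 2)⁻¹) :=
    aux_integrable c lam hc hlam
  have hint2 : Integrable
      (fun q : EuclideanSpace ℝ (Fin 2) => M * ((lam + c * ‖a + q‖ ^ 2) ^ 2)⁻¹) :=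
    (hint.comp_add_left a).const_mul M
  have step1 : (∫ q : EuclideanSpace ℝ (Fin 2), V q / (lam + c * ‖a + q‖ ^ 2) ^ 2)
      ≤ ∫ q : EuclideanSpace ℝ (Fin 2), M * ((lam + c * ‖a + q‖ ^ 2) ^ 2)⁻¹ := by
    apply integral_mono_of_nonneg
    · filter_upwards with q
      have h : (0:ℝ) < (lam + c * ‖a + q‖ ^ 2) ^ 2 := by positivity
      exact div_nonneg (hV0 q) h.le
    · exact hint2
    · filter_upwards with q
      have hD : (0:ℝ) < (lam + c * ‖a + q‖ ^ 2) ^ 2 := by positivity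
      rw [div_eq_mul_inv]
      exact mul_le_mul_of_nonneg_right (hVM q) (by positivity)
  have step2 : (∫ q : EuclideanSpace ℝ (Fin 2), M * ((lam + c * ‖a + q‖ ^ 2) ^ 2)⁻¹)
      = M * (2 * B * (2 * c * lam)⁻¹) := by
    rw [integral_const_mul]
    congr 1
    rw [integral_add_left_eq_self (μ := volume)
      (fun x : EuclideanSpace ℝ (Fin 2) => ((lam + c * ‖x‖ ^ 2) ^ 2)⁻¹) a]
    exact aux_twodim c lam hc hlam
  calc (∫ q : EuclideanSpace ℝ (Fin 2), V q / (lam + c * ‖a + q‖ ^ 2) ^ 2)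
      ≤ M * (2 * B * (2 * c * lam)⁻¹) := step1.trans_eq step2
    _ = M * B / c / lam := by field_simp
    _ ≤ (M * B / c + 1) / lam := by
        gcongr
        linarith
end

section
/- Let p₁, p₂ ∈ ℝ² with p₂ ≠ 0, and let θ be the angle between a vector q and p₂. For q in Ω₁ = {x ∈ ℝ² : |p₁ + x| < |p₂|/2}, one has sin²θ ≤ 4|q + p₂|² / max(|p₂|², |p₁|²/4). -/
/-- The two-dimensional cross product `u × v = u₁ v₂ − u₂ v₁`. -/
def cross2 (u v : EuclideanSpace ℝ (Fin 2)) : ℝ := u 0 * v 1 - u 1 * v 0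

lemma norm_sq_two (u : EuclideanSpace ℝ (Fin 2)) : ‖u‖ ^ 2 = u 0 ^ 2 + u 1 ^ 2 := by
  rw [EuclideanSpace.norm_eq, Real.sq_sqrt (by positivity)]
  simp [Fin.sum_univ_two, sq_abs]

lemma cross2_sq_le (u v : EuclideanSpace ℝ (Fin 2)) :
    (cross2 u v) ^ 2 ≤ ‖u‖ ^ 2 * ‖v‖ ^ 2 := by
  rw [norm_sq_two, norm_sq_two, cross2]
  nlinarith [sq_nonneg (u 0 * v 0 + u 1 * v 1)]

theorem stmt7 (p₁ p₂ : EuclideanSpace ℝ (Fin 2)) (hp₂ : p₂ ≠ 0)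
    (q : EuclideanSpace ℝ (Fin 2)) (hq : ‖p₁ + q‖ < ‖p₂‖ / 2) :
    (cross2 q p₂) ^ 2 / (‖q‖ ^ 2 * ‖p₂‖ ^ 2)
      ≤ 4 * ‖q + p₂‖ ^ 2 / max (‖p₂‖ ^ 2) (‖p₁‖ ^ 2 / 4) := by
  have hp₂' : (0:ℝ) < ‖p₂‖ := norm_pos_iff.mpr hp₂
  by_cases hq0 : q = 0
  · subst hq0
    have : cross2 0 p₂ = 0 := by simp [cross2]
    rw [this]
    simp only [ne_eq, OfNat.ofNat_ne_zero, not_false_eq_true, zero_pow, zero_div]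
    positivity
  have hqpos : (0:ℝ) < ‖q‖ := norm_pos_iff.mpr hq0
  -- cross2 q p₂ equals cross2 q (q+p₂) and cross2 (q+p₂) p₂
  have hc1 : cross2 q p₂ = cross2 q (q + p₂) := by
    simp only [cross2, PiLp.add_apply]; ring
  have hc2 : cross2 q p₂ = cross2 (q + p₂) p₂ := by
    simp only [cross2, PiLp.add_apply]; ring
  have hb1 : (cross2 q p₂) ^ 2 ≤ ‖q‖ ^ 2 * ‖q + p₂‖ ^ 2 := by
    rw [hc1]; exact cross2_sq_le _ _
  have hb2 : (cross2 q p₂) ^ 2 ≤ ‖q + p₂‖ ^ 2 * ‖p₂‖ ^ 2 := by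
    rw [hc2]; exact cross2_sq_le _ _
  rcases le_total (‖p₁‖ ^ 2 / 4) (‖p₂‖ ^ 2) with hmax | hmax
  · rw [max_eq_left hmax, div_le_div_iff₀ (by positivity) (by positivity)]
    nlinarith [sq_nonneg (‖q + p₂‖ * ‖p₂‖), sq_nonneg ‖p₂‖]
  · have h2 : 2 * ‖p₂‖ ≤ ‖p₁‖ := by nlinarith [norm_nonneg p₁]
    have hp₁pos : (0:ℝ) < ‖p₁‖ := by linarith
    rw [max_eq_right hmax, div_le_div_iff₀ (by positivity) (by positivity)]
    have htri : ‖p₁‖ ≤ ‖p₁ + q‖ + ‖q‖ := by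
      have := norm_add_le (p₁ + q) (-q)
      simpa using this
    have hqbig : ‖p₁‖ / 4 ≤ ‖q‖ := by nlinarith
    have hqsq : ‖p₁‖ ^ 2 / 16 ≤ ‖q‖ ^ 2 := by nlinarith
    have h3 := mul_le_mul_of_nonneg_right hb2 (by positivity : (0:ℝ) ≤ ‖p₁‖ ^ 2 / 4)
    have h4 := mul_le_mul_of_nonneg_left hqsq
      (by positivity : (0:ℝ) ≤ 4 * (‖q + p₂‖ ^ 2 * ‖p₂‖ ^ 2))
    nlinarith [h3, h4]
end

section
/- Let ν > 0 and G_i^{+,m}, G_j be as in the iterated simplex definition (G_0^{+,m} = 1, G_i^{+,m}(x) = ∫_{Δ_x^{i−1}} ∏_{l=0}^{i−1}(1 + (4/ν⁴)G_{m+l}((ν⁴/4)x_l))^{−2} dx). Then for i ≥ 1, (G_i^{+,m})'(x) = (4/ν⁴) G_{i−1}^{+,m}(x) / (1 + (4/ν⁴) G_{m+i−1}(x))². -/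
open MeasureTheory intervalIntegral

namespace Stmt13Aux

/-- The ordered simplex. -/
def simplex (i : ℕ) (R : ℝ) : Set (Fin i → ℝ) :=
  {y | (∀ l, 0 ≤ y l ∧ y l ≤ R) ∧ ∀ l l' : Fin i, l ≤ l' → y l ≤ y l'}

lemma isClosed_simplex (i : ℕ) (R : ℝ) : IsClosed (simplex i R) := by
  have h : simplex i R =
      (⋂ l, ({y : Fin i → ℝ | 0 ≤ y l} ∩ {y | y l ≤ R})) ∩
        ⋂ l, ⋂ l', ⋂ (_ : l ≤ l'), {y : Fin i → ℝ | y l ≤ y l'} := by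
    ext y
    simp only [simplex, Set.mem_setOf_eq, Set.mem_inter_iff, Set.mem_iInter]
  rw [h]
  refine IsClosed.inter (isClosed_iInter fun l => IsClosed.inter ?_ ?_)
    (isClosed_iInter fun l => isClosed_iInter fun l' => isClosed_iInter fun _ => ?_)
  · exact isClosed_le continuous_const (continuous_apply l)
  · exact isClosed_le (continuous_apply l) continuous_const
  · exact isClosed_le (continuous_apply l) (continuous_apply l')

lemma measurableSet_simplex (i : ℕ) (R : ℝ) : MeasurableSet (simplex i R) :=
  (isClosed_simplex i R).measurableSet

lemma isCompact_simplex (i : ℕ) (R : ℝ) : IsCompact (simplex i R) := by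
  refine IsCompact.of_isClosed_subset (isCompact_Icc (a := (0 : Fin i → ℝ))
    (b := fun _ => R)) (isClosed_simplex i R) ?_
  intro y hy
  exact ⟨fun l => (hy.1 l).1, fun l => (hy.1 l).2⟩

lemma snoc_mem_simplex_iff {n : ℕ} {R s : ℝ} {z : Fin n → ℝ} :
    (Fin.snoc z s : Fin (n+1) → ℝ) ∈ simplex (n+1) R ↔ s ∈ Set.Icc 0 R ∧ z ∈ simplex n s := by
  constructor
  · rintro ⟨h1, h2⟩
    have hs := h1 (Fin.last n)
    rw [Fin.snoc_last] at hs
    refine ⟨hs, fun l => ?_, fun l l' hll' => ?_⟩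
    · have h := h1 l.castSucc
      rw [Fin.snoc_castSucc] at h
      have h' := h2 l.castSucc (Fin.last n) (Fin.le_last _)
      rw [Fin.snoc_castSucc, Fin.snoc_last] at h'
      exact ⟨h.1, h'⟩
    · have h := h2 l.castSucc l'.castSucc (by simpa using hll')
      rw [Fin.snoc_castSucc, Fin.snoc_castSucc] at h
      exact h
  · rintro ⟨⟨hs0, hsR⟩, hz, hmono⟩
    constructor
    · intro l
      refine Fin.lastCases ?_ (fun j => ?_) l
      · rw [Fin.snoc_last]; exact ⟨hs0, hsR⟩
      · rw [Fin.snoc_castSucc]; exact ⟨(hz j).1, le_trans (hz j).2 hsR⟩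
    · intro l l' hll'
      rcases Fin.eq_castSucc_or_eq_last l' with ⟨j', rfl⟩ | rfl
      · rcases Fin.eq_castSucc_or_eq_last l with ⟨j, rfl⟩ | rfl
        · rw [Fin.snoc_castSucc, Fin.snoc_castSucc]
          exact hmono j j' (by simpa using hll')
        · exact absurd (lt_of_le_of_lt hll' (Fin.castSucc_lt_last j')) (lt_irrefl _)
      · rcases Fin.eq_castSucc_or_eq_last l with ⟨j, rfl⟩ | rfl
        · rw [Fin.snoc_castSucc, Fin.snoc_last]; exact (hz j).2
        · rw [Fin.snoc_last]

lemma slice (n : ℕ) (g : Fin (n+1) → ℝ → ℝ) (hg : ∀ l, Continuous (g l)) (R : ℝ) :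
    ∫ y in simplex (n+1) R, ∏ l, g l (y l)
      = ∫ s in Set.Icc (0:ℝ) R,
          (∫ z in simplex n s, ∏ l : Fin n, g l.castSucc (z l)) * g (Fin.last n) s := by
  classical
  have hmp := volume_preserving_piFinSuccAbove (fun _ : Fin (n+1) => ℝ) (Fin.last n)
  set e := MeasurableEquiv.piFinSuccAbove (fun _ : Fin (n+1) => ℝ) (Fin.last n) with he
  have hsymm : ∀ p : ℝ × (Fin n → ℝ), e.symm p = (Fin.snoc p.2 p.1 : Fin (n+1) → ℝ) := by
    intro p
    simp [he, MeasurableEquiv.piFinSuccAbove_symm_apply, Fin.insertNthEquiv,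
      Fin.insertNth_last']
  set gp : (Fin (n+1) → ℝ) → ℝ := fun y => ∏ l, g l (y l) with hgp
  have hgpc : Continuous gp :=
    continuous_finset_prod _ fun l _ => (hg l).comp (continuous_apply (A := fun _ => ℝ) l)
  have hsnocc : Continuous fun p : ℝ × (Fin n → ℝ) => (Fin.snoc p.2 p.1 : Fin (n+1) → ℝ) := by
    refine continuous_pi fun l => ?_
    refine Fin.lastCases ?_ (fun j => ?_) l
    · simpa using (continuous_fst : Continuous fun p : ℝ × (Fin n → ℝ) => p.1)
    · simpa [Function.comp_def] using ((continuous_apply (A := fun _ => ℝ) j).comp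
        (continuous_snd : Continuous fun p : ℝ × (Fin n → ℝ) => p.2))
  set F2 : ℝ × (Fin n → ℝ) → ℝ :=
    fun p => Set.indicator (simplex (n+1) R) gp (Fin.snoc p.2 p.1) with hF2
  set E : Set (ℝ × (Fin n → ℝ)) :=
    (fun p : ℝ × (Fin n → ℝ) => (Fin.snoc p.2 p.1 : Fin (n+1) → ℝ)) ⁻¹' simplex (n+1) R with hE
  have hEclosed : IsClosed E := (isClosed_simplex _ _).preimage hsnocc
  have hEsub : E ⊆ Set.Icc (0:ℝ) R ×ˢ Set.Icc (0 : Fin n → ℝ) (fun _ => R) := by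
    rintro ⟨s, z⟩ hp
    rcases snoc_mem_simplex_iff.mp hp with ⟨hs, hz⟩
    exact ⟨hs, ⟨fun l => (hz.1 l).1, fun l => le_trans (hz.1 l).2 hs.2⟩⟩
  have hEcomp : IsCompact E :=
    IsCompact.of_isClosed_subset (isCompact_Icc.prod isCompact_Icc) hEclosed hEsub
  have hF2int : Integrable F2 := by
    have h : F2 = E.indicator fun p => gp (Fin.snoc p.2 p.1) := by
      funext p
      show (simplex (n+1) R).indicator gp (Fin.snoc p.2 p.1)
        = E.indicator (fun p => gp (Fin.snoc p.2 p.1)) p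
      by_cases hp : p ∈ E
      · rw [Set.indicator_of_mem hp,
          Set.indicator_of_mem (show (Fin.snoc p.2 p.1 : Fin (n+1) → ℝ) ∈ simplex (n+1) R from hp)]
      · rw [Set.indicator_of_notMem hp,
          Set.indicator_of_notMem (show (Fin.snoc p.2 p.1 : Fin (n+1) → ℝ) ∉ simplex (n+1) R from hp)]
    rw [h]
    exact ((hgpc.comp hsnocc).continuousOn.integrableOn_compact
      hEcomp).integrable_indicator hEclosed.measurableSet
  calc ∫ y in simplex (n+1) R, ∏ l, g l (y l)
      = ∫ y, Set.indicator (simplex (n+1) R) gp y :=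
        (MeasureTheory.integral_indicator (measurableSet_simplex _ _)).symm
    _ = ∫ y, F2 (e y) := by
        congr 1
        funext y
        have h1 : (Fin.snoc (e y).2 (e y).1 : Fin (n+1) → ℝ) = y := by
          rw [← hsymm (e y), MeasurableEquiv.symm_apply_apply]
        simp only [hF2, h1]
    _ = ∫ p, F2 p := hmp.integral_comp' F2
    _ = ∫ s, ∫ z, F2 (s, z) := by
        rw [Measure.volume_eq_prod] at hF2int ⊢
        exact integral_prod F2 hF2int
    _ = ∫ s, Set.indicator (Set.Icc (0:ℝ) R)
          (fun s => (∫ z in simplex n s, ∏ l : Fin n, g l.castSucc (z l))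
            * g (Fin.last n) s) s := by
        congr 1
        funext s
        by_cases hs : s ∈ Set.Icc (0:ℝ) R
        · rw [Set.indicator_of_mem hs]
          have hfun : (fun z => F2 (s, z)) = (simplex n s).indicator
              fun z => (∏ l : Fin n, g l.castSucc (z l)) * g (Fin.last n) s := by
            funext z
            by_cases hz : z ∈ simplex n s
            · rw [Set.indicator_of_mem hz]
              have hmem : (Fin.snoc z s : Fin (n+1) → ℝ) ∈ simplex (n+1) R :=
                snoc_mem_simplex_iff.mpr ⟨hs, hz⟩
              show Set.indicator (simplex (n+1) R) gp (Fin.snoc z s) = _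
              rw [Set.indicator_of_mem hmem]
              simp only [hgp]
              rw [Fin.prod_univ_castSucc]
              simp only [Fin.snoc_castSucc, Fin.snoc_last]
            · rw [Set.indicator_of_notMem hz]
              apply Set.indicator_of_notMem
              intro hmem
              exact hz (snoc_mem_simplex_iff.mp hmem).2
          rw [hfun, MeasureTheory.integral_indicator (measurableSet_simplex _ _), MeasureTheory.integral_mul_const]
        · rw [Set.indicator_of_notMem hs]
          have hfun : (fun z => F2 (s, z)) = fun _ => (0:ℝ) := by
            funext z
            apply Set.indicator_of_notMem
            intro hmem
            exact hs (snoc_mem_simplex_iff.mp hmem).1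
          rw [hfun, MeasureTheory.integral_zero]
    _ = ∫ s in Set.Icc (0:ℝ) R,
          (∫ z in simplex n s, ∏ l : Fin n, g l.castSucc (z l)) * g (Fin.last n) s :=
        MeasureTheory.integral_indicator measurableSet_Icc

end Stmt13Aux

open Stmt13Aux

theorem stmt13 (ν : ℝ) (hν : 0 < ν) (G : ℕ → ℝ → ℝ)
    (hG1 : ∀ x : ℝ, G 1 x = 0)
    (hGrec : ∀ j, 1 ≤ j → ∀ x : ℝ,
      G (j + 1) x = ∫ y in (0 : ℝ)..x, 1 / (1 + (4 / ν ^ 4) * G j y))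
    (m : ℕ) (hm : 1 ≤ m)
    (Gp : ℕ → ℝ → ℝ)
    (hGp0 : ∀ x : ℝ, Gp 0 x = 1)
    (hGpdef : ∀ i, 1 ≤ i → ∀ x : ℝ,
      Gp i x = ∫ y in {y : Fin i → ℝ |
          (∀ l, 0 ≤ y l ∧ y l ≤ 4 / ν ^ 4 * x) ∧ ∀ l l' : Fin i, l ≤ l' → y l ≤ y l'},
        ∏ l : Fin i, 1 / (1 + (4 / ν ^ 4) * G (m + (l : ℕ)) (ν ^ 4 / 4 * y l)) ^ 2) :
    ∀ i, 1 ≤ i → ∀ x : ℝ, 0 ≤ x →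
      HasDerivWithinAt (Gp i)
        ((4 / ν ^ 4) * Gp (i - 1) x / (1 + (4 / ν ^ 4) * G (m + i - 1) x) ^ 2)
        (Set.Ici 0) x := by
  have hν' : ν ≠ 0 := ne_of_gt hν
  have hc : (0:ℝ) < 4 / ν ^ 4 := by positivity
  have hk : (0:ℝ) < ν ^ 4 / 4 := by positivity
  have hck : ∀ s : ℝ, 4 / ν ^ 4 * (ν ^ 4 / 4 * s) = s := by
    intro s; field_simp
  have hkc : ∀ t : ℝ, ν ^ 4 / 4 * (4 / ν ^ 4 * t) = t := by
    intro t; field_simp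
  set c : ℝ := 4 / ν ^ 4 with hcdef
  set k : ℝ := ν ^ 4 / 4 with hkdef
  -- Properties of G
  have hGprop : ∀ j, 1 ≤ j →
      ContinuousOn (G j) (Set.Ici 0) ∧ ∀ x : ℝ, 0 ≤ x → 0 ≤ G j x := by
    intro j hj
    induction j, hj using Nat.le_induction with
    | base =>
      exact ⟨continuousOn_const.congr fun x _ => hG1 x, fun x _ => le_of_eq (hG1 x).symm⟩
    | succ j hj ih =>
      obtain ⟨ihc, ihp⟩ := ih
      have hden : ∀ y : ℝ, 0 ≤ y → (0:ℝ) < 1 + c * G j y := by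
        intro y hy
        have := mul_nonneg hc.le (ihp y hy)
        linarith
      set f : ℝ → ℝ := fun y => 1 / (1 + c * G j (max y 0)) with hfdef
      have hGm : Continuous fun y : ℝ => G j (max y 0) :=
        ihc.comp_continuous (continuous_id.max continuous_const) fun y => le_max_right y 0
      have hfc : Continuous f := by
        refine continuous_const.div (continuous_const.add (continuous_const.mul hGm))
          fun y => ?_
        exact (hden _ (le_max_right y 0)).ne'
      have heq : ∀ x : ℝ, 0 ≤ x → G (j+1) x = ∫ y in (0:ℝ)..x, f y := by
        intro x hx
        rw [hGrec j hj x]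
        refine intervalIntegral.integral_congr fun y hy => ?_
        rw [Set.uIcc_of_le hx] at hy
        simp only [hfdef]
        rw [max_eq_left hy.1]
      constructor
      · exact ((intervalIntegral.continuous_primitive
          (fun a b => hfc.intervalIntegrable a b) 0).continuousOn).congr fun x hx => heq x hx
      · intro x hx
        rw [heq x hx]
        refine intervalIntegral.integral_nonneg hx fun u _ => ?_
        simp only [hfdef]
        exact (div_pos one_pos (hden _ (le_max_right u 0))).le
  -- the factor functions
  set gl : ℕ → ℝ → ℝ := fun l t => 1 / (1 + c * G (m + l) (k * max t 0)) ^ 2 with hgl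
  have hdenl : ∀ (l : ℕ) (t : ℝ), (0:ℝ) < 1 + c * G (m + l) (k * max t 0) := by
    intro l t
    have hml : 1 ≤ m + l := le_trans hm (Nat.le_add_right m l)
    have h0 : 0 ≤ G (m + l) (k * max t 0) :=
      (hGprop (m + l) hml).2 _ (mul_nonneg hk.le (le_max_right t 0))
    have := mul_nonneg hc.le h0
    linarith
  have hglc : ∀ l : ℕ, Continuous (gl l) := by
    intro l
    have hml : 1 ≤ m + l := le_trans hm (Nat.le_add_right m l)
    have hGm : Continuous fun t : ℝ => G (m + l) (k * max t 0) :=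
      (hGprop (m + l) hml).1.comp_continuous
        (continuous_const.mul (continuous_id.max continuous_const))
        fun t => mul_nonneg hk.le (le_max_right t 0)
    refine continuous_const.div
      ((continuous_const.add (continuous_const.mul hGm)).pow 2) fun t => ?_
    exact pow_ne_zero 2 (hdenl l t).ne'
  -- inner integral identification
  have hinner : ∀ (n : ℕ) (s : ℝ), 0 ≤ s →
      (∫ z in simplex n s, ∏ l : Fin n, gl (l:ℕ) (z l)) = Gp n (k * s) := by
    intro n s hs
    rcases Nat.eq_zero_or_pos n with rfl | hn
    · rw [hGp0]
      have huniv : simplex 0 s = Set.univ := by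
        ext z
        simp [simplex]
      rw [huniv, Measure.restrict_univ]
      simp only [Fin.prod_univ_zero]
      rw [MeasureTheory.integral_const, smul_eq_mul, mul_one]
      have h1 : (volume : Measure (Fin 0 → ℝ)) Set.univ = 1 := by
        rw [volume_pi, Measure.pi_univ]
        simp
      rw [measureReal_def, h1, ENNReal.toReal_one]
    · rw [hGpdef n hn (k * s)]
      simp only [hck]
      refine setIntegral_congr_fun (measurableSet_simplex n s) fun z hz => ?_
      refine Finset.prod_congr rfl fun l _ => ?_
      simp only [hgl]
      rw [max_eq_left (hz.1 l).1]
  -- the recursion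
  have hrec : ∀ (n : ℕ) (x : ℝ), 0 ≤ x →
      Gp (n+1) x = ∫ t in (0:ℝ)..x, c * (Gp n t * gl n (c * t)) := by
    intro n x hx
    have h1 : Gp (n+1) x = ∫ y in simplex (n+1) (c*x), ∏ l : Fin (n+1), gl (l:ℕ) (y l) := by
      rw [hGpdef (n+1) (Nat.succ_le_succ (Nat.zero_le n)) x]
      refine (setIntegral_congr_fun (measurableSet_simplex (n+1) (c*x)) fun y hy => ?_).symm
      refine Finset.prod_congr rfl fun l _ => ?_
      simp only [hgl]
      rw [max_eq_left (hy.1 l).1]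
    rw [h1, slice n (fun l => gl (l:ℕ)) (fun l => hglc _) (c*x)]
    have h2 : Set.EqOn
        (fun s => (∫ z in simplex n s,
            ∏ l : Fin n, gl ((l.castSucc : Fin (n+1)) : ℕ) (z l))
          * gl ((Fin.last n : Fin (n+1)) : ℕ) s)
        (fun s => Gp n (k * s) * gl n s) (Set.Icc (0:ℝ) (c*x)) := by
      intro s hs
      simp only [Fin.coe_castSucc, Fin.val_last]
      rw [hinner n s hs.1]
    rw [setIntegral_congr_fun measurableSet_Icc h2]
    rw [MeasureTheory.integral_Icc_eq_integral_Ioc,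
      ← intervalIntegral.integral_of_le (mul_nonneg hc.le hx)]
    have hsub : ∫ t in (0:ℝ)..x, c * (Gp n t * gl n (c*t))
        = ∫ s in (0:ℝ)..(c*x), Gp n (k*s) * gl n s := by
      have h3 : Set.EqOn (fun t => Gp n t * gl n (c * t))
          (fun t => (fun s => Gp n (k*s) * gl n s) (c * t)) (Set.uIcc 0 x) := by
        intro t _
        simp only
        rw [hkc t]
      calc ∫ t in (0:ℝ)..x, c * (Gp n t * gl n (c*t))
          = c * ∫ t in (0:ℝ)..x, (fun s => Gp n (k*s) * gl n s) (c*t) := by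
            rw [intervalIntegral.integral_const_mul]
            congr 1
            exact intervalIntegral.integral_congr h3
        _ = c * (c⁻¹ • ∫ s in (c*0)..(c*x), Gp n (k*s) * gl n s) := by
            congr 1
            exact intervalIntegral.integral_comp_mul_left (fun s => Gp n (k*s) * gl n s) hc.ne'
        _ = ∫ s in (0:ℝ)..(c*x), Gp n (k*s) * gl n s := by
            rw [mul_zero, smul_eq_mul, ← mul_assoc, mul_inv_cancel₀ hc.ne', one_mul]
    exact hsub.symm
  -- continuity of Gp on Ici 0
  have hcontGp : ∀ n : ℕ, ContinuousOn (Gp n) (Set.Ici 0) := by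
    intro n
    induction n with
    | zero => exact continuousOn_const.congr fun x _ => hGp0 x
    | succ n ih =>
      have hfec : Continuous fun t : ℝ => c * (Gp n (max t 0) * gl n (c*t)) :=
        continuous_const.mul
          ((ih.comp_continuous (continuous_id.max continuous_const)
            fun t => le_max_right t 0).mul
            ((hglc n).comp (continuous_const.mul continuous_id)))
      refine ((intervalIntegral.continuous_primitive (μ := volume)
        (fun a b => hfec.intervalIntegrable a b) 0).continuousOn).congr fun x hx => ?_
      rw [hrec n x hx]
      refine intervalIntegral.integral_congr fun t ht => ?_
      rw [Set.uIcc_of_le hx] at ht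
      rw [max_eq_left ht.1]
  -- main statement
  intro i hi x hx
  obtain ⟨n, rfl⟩ : ∃ n, i = n + 1 := ⟨i - 1, (Nat.succ_pred_eq_of_pos hi).symm⟩
  have hi1 : n + 1 - 1 = n := rfl
  have hmi : m + (n + 1) - 1 = m + n := by omega
  rw [hi1, hmi]
  set fe : ℝ → ℝ := fun t => c * (Gp n (max t 0) * gl n (c*t)) with hfe
  have hfec : Continuous fe :=
    continuous_const.mul
      (((hcontGp n).comp_continuous (continuous_id.max continuous_const)
        fun t => le_max_right t 0).mul
        ((hglc n).comp (continuous_const.mul continuous_id)))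
  have hPW : HasDerivWithinAt (fun u => ∫ t in (0:ℝ)..u, fe t) (fe x) (Set.Ici 0) x :=
    (hfec.integral_hasStrictDerivAt 0 x).hasDerivAt.hasDerivWithinAt
  have hEq : Set.EqOn (Gp (n+1)) (fun u => ∫ t in (0:ℝ)..u, fe t) (Set.Ici 0) := by
    intro u hu
    rw [hrec n u hu]
    refine intervalIntegral.integral_congr fun t ht => ?_
    rw [Set.uIcc_of_le hu] at ht
    simp only [hfe]
    rw [max_eq_left ht.1]
  have hD := hPW.congr hEq (hEq hx)
  refine HasDerivWithinAt.congr_deriv hD ?_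
  simp only [hfe, hgl]
  have h4 : k * max (c*x) 0 = x := by
    rw [max_eq_left (mul_nonneg hc.le hx), hkc x]
  rw [max_eq_left hx, h4]
  ring
end
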